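/- For every real s with 0 < s < 1 and every integer k ≥ 1, the sum Σ_{i=1}^{k-1} (1-s)^{i(k-i)} is strictly less than 2(1-s)^{k-1}/s. -/

import Mathlib

lemma aux_nat_ineq (a b : ℕ) (ha : 1 ≤ a) (hab : a ≤ b) : 2 * a + b ≤ a * b + 2 := by
  rcases Nat.lt_or_ge b 2 with hb | hb
  · interval_cases b <;> omega
  · zify at *
    nlinarith [mul_nonneg (by linarith : (0:ℤ) ≤ (a:ℤ) - 1) (by linarith : (0:ℤ) ≤ (b:ℤ) - 2)]

/-- For `0 < s < 1` and `k ≥ 1`, `∑_{i=1}^{k-1} (1-s)^{i(k-i)} < 2(1-s)^{k-1}/s`. -/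
theorem stmt8 (s : ℝ) (hs0 : 0 < s) (hs1 : s < 1) (k : ℕ) (hk : 1 ≤ k) :
    ∑ i ∈ Finset.Icc 1 (k - 1), (1 - s) ^ (i * (k - i))
      < 2 * (1 - s) ^ (k - 1) / s := by
  set q : ℝ := 1 - s with hq
  have hq0 : 0 < q := by simp only [hq]; linarith
  have hq1 : q < 1 := by simp only [hq]; linarith
  rcases eq_or_lt_of_le hk with h1 | hk2
  · -- k = 1
    rw [← h1]
    simp
    positivity
  · -- k ≥ 2
    have hk2' : 2 ≤ k := hk2
    -- per-term bound
    have key : ∀ i ∈ Finset.Icc 1 (k - 1),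
        q ^ (i * (k - i)) ≤ q ^ (k - 2 + i) + q ^ (2 * k - 2 - i) := by
      intro i hi
      rw [Finset.mem_Icc] at hi
      obtain ⟨hi1, hi2⟩ := hi
      set j := k - i with hj
      have hj1 : 1 ≤ j := by omega
      have hkij : k = i + j := by omega
      have hpos1 : (0:ℝ) ≤ q ^ (k - 2 + i) := by positivity
      have hpos2 : (0:ℝ) ≤ q ^ (2 * k - 2 - i) := by positivity
      rcases le_total i j with hij | hij
      · have h := aux_nat_ineq i j hi1 hij
        have hle : k - 2 + i ≤ i * (k - i) := by
          have : k - i = j := rfl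
          rw [this]; omega
        calc q ^ (i * (k - i)) ≤ q ^ (k - 2 + i) :=
              pow_le_pow_of_le_one hq0.le hq1.le hle
          _ ≤ q ^ (k - 2 + i) + q ^ (2 * k - 2 - i) := by linarith
      · have h := aux_nat_ineq j i hj1 hij
        have hle : 2 * k - 2 - i ≤ i * (k - i) := by
          have : k - i = j := rfl
          rw [this]
          have : i * j = j * i := Nat.mul_comm i j
          omega
        calc q ^ (i * (k - i)) ≤ q ^ (2 * k - 2 - i) :=
              pow_le_pow_of_le_one hq0.le hq1.le hle
          _ ≤ q ^ (k - 2 + i) + q ^ (2 * k - 2 - i) := by linarith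
    have step1 := Finset.sum_le_sum key
    -- rewrite the bounding sum
    have hIcc : Finset.Icc 1 (k - 1) = Finset.Ico 1 k := by
      rw [← Finset.Ico_add_one_right_eq_Icc]
      congr 1
      omega
    set T : ℝ := ∑ j ∈ Finset.range (k - 1), q ^ (k - 1 + j) with hT
    have hsum1 : ∑ i ∈ Finset.Icc 1 (k - 1), q ^ (k - 2 + i) = T := by
      rw [hIcc, Finset.sum_Ico_eq_sum_range, hT]
      apply Finset.sum_congr rfl
      intro j hj
      congr 1
      omega
    have hsum2 : ∑ i ∈ Finset.Icc 1 (k - 1), q ^ (2 * k - 2 - i) = T := by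
      rw [hIcc, Finset.sum_Ico_eq_sum_range, hT]
      rw [← Finset.sum_range_reflect (fun j => q ^ (k - 1 + j)) (k - 1)]
      apply Finset.sum_congr rfl
      intro j hj
      rw [Finset.mem_range] at hj
      congr 1
      omega
    have hsplit : ∑ i ∈ Finset.Icc 1 (k - 1),
        (q ^ (k - 2 + i) + q ^ (2 * k - 2 - i)) = 2 * T := by
      rw [Finset.sum_add_distrib, hsum1, hsum2]; ring
    -- geometric sum bound
    have hgeom : ∑ j ∈ Finset.range (k - 1), q ^ j < 1 / s := by
      rw [geom_sum_eq (ne_of_lt hq1)]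
      have hqs : q - 1 = -s := by simp [hq]
      rw [hqs, div_neg, ← neg_div, neg_sub]
      have hqk : (0:ℝ) < q ^ (k - 1) := by positivity
      gcongr
      · linarith

    have hTbound : T < q ^ (k - 1) / s := by
      have : T = q ^ (k - 1) * ∑ j ∈ Finset.range (k - 1), q ^ j := by
        rw [hT, Finset.mul_sum]
        apply Finset.sum_congr rfl
        intro j _
        rw [← pow_add]
      rw [this, div_eq_mul_inv, ← one_div]
      exact mul_lt_mul_of_pos_left hgeom (by positivity)
    calc ∑ i ∈ Finset.Icc 1 (k - 1), q ^ (i * (k - i))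
        ≤ 2 * T := by rw [← hsplit]; exact step1
      _ < 2 * (q ^ (k - 1) / s) := by linarith
      _ = 2 * q ^ (k - 1) / s := by ring
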